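/- For every integer n ≥ 1, the number of Schröder paths of length 2n in which every horizontal step H² has height 1 equals the number of UH-free Schröder paths of length 2n whose first step is U and which have no horizontal step of height greater than 1. -/

import Mathlib

/-- Steps of a Schröder path: `U = (1,1)`, `D = (1,-1)`, `H = H² = (2,0)`. -/
inductive SStep : Type
  | U : SStep
  | D : SStep
  | H : SStep
  deriving DecidableEq

/-- The contribution of a step to the x-coordinate. -/
def SStep.len : SStep → ℕ
  | U => 1
  | D => 1
  | H => 2

/-- The contribution of a step to the y-coordinate. -/
def SStep.eff : SStep → ℤ
  | U => 1
  | D => -1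
  | H => 0

/-- The height (y-coordinate of the starting point) of the `i`-th step (0-indexed);
for `i = L.length` this is the final height of the path. -/
def sHeight (L : List SStep) (i : ℕ) : ℤ := ((L.take i).map SStep.eff).sum

/-- `L` is a Schröder path of length `2 * n`: it has total horizontal displacement `2 * n`,
ends at height `0`, and never goes below the x-axis. -/
def IsSchroder (L : List SStep) (n : ℕ) : Prop :=
  (L.map SStep.len).sum = 2 * n ∧ (L.map SStep.eff).sum = 0 ∧ ∀ i, 0 ≤ sHeight L i

/-- A peak at position `i`: an up step immediately followed by a down step.
The height of this peak is `sHeight L (i+1)`, the height of its down step. -/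
def IsPeakAt (L : List SStep) (i : ℕ) : Prop :=
  L[i]? = some SStep.U ∧ L[i+1]? = some SStep.D

/-- `L` has no peak of odd height. -/
def NoOddPeak (L : List SStep) : Prop :=
  ∀ i, IsPeakAt L i → ¬ Odd (sHeight L (i+1))

/-- `L` has no peak of even height. -/
def NoEvenPeak (L : List SStep) : Prop :=
  ∀ i, IsPeakAt L i → ¬ Even (sHeight L (i+1))

/-- `L` is UH-free: no up step is immediately followed by a horizontal step. -/
def UHFree (L : List SStep) : Prop :=
  ∀ i, ¬ (L[i]? = some SStep.U ∧ L[i+1]? = some SStep.H)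

/-- The number of peaks of `L` of even height greater than `2`. -/
def evenHighPeaks (L : List SStep) : ℕ :=
  ((Finset.range L.length).filter
    (fun i => L[i]? = some SStep.U ∧ L[i+1]? = some SStep.D ∧
      Even (sHeight L (i+1)) ∧ 2 < sHeight L (i+1))).card

namespace SchAux
open SStep

def tot (L : List SStep) : ℤ := (L.map SStep.eff).sum
def wid (L : List SStep) : ℕ := (L.map SStep.len).sum

@[simp] lemma tot_nil : tot [] = 0 := rfl
@[simp] lemma tot_cons (s L) : tot (s :: L) = eff s + tot L := by simp [tot]
@[simp] lemma tot_append (L1 L2) : tot (L1 ++ L2) = tot L1 + tot L2 := by simp [tot]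
@[simp] lemma wid_nil : wid [] = 0 := rfl
@[simp] lemma wid_cons (s L) : wid (s :: L) = len s + wid L := by simp [wid]
@[simp] lemma wid_append (L1 L2) : wid (L1 ++ L2) = wid L1 + wid L2 := by simp [wid]
@[simp] lemma tot_replicateH (a : ℕ) : tot (List.replicate a H) = 0 := by simp [tot, eff]
@[simp] lemma wid_replicateH (a : ℕ) : wid (List.replicate a H) = 2 * a := by
  simp [wid, len, mul_comm]

@[simp] lemma sHeight_nil (i) : sHeight [] i = 0 := by simp [sHeight]
@[simp] lemma sHeight_zero (L) : sHeight L 0 = 0 := by simp [sHeight]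
lemma sHeight_cons (s L i) : sHeight (s :: L) (i + 1) = eff s + sHeight L i := by
  simp [sHeight]

lemma sHeight_of_length_le {L : List SStep} {i : ℕ} (h : L.length ≤ i) :
    sHeight L i = tot L := by
  simp [sHeight, tot, List.take_of_length_le h]

lemma sHeight_append (L1 L2 : List SStep) (i : ℕ) :
    sHeight (L1 ++ L2) i = sHeight L1 i + sHeight L2 (i - L1.length) := by
  simp [sHeight, List.take_append]

lemma sHeight_append_left {L1 L2 : List SStep} {i : ℕ} (h : i ≤ L1.length) :
    sHeight (L1 ++ L2) i = sHeight L1 i := by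
  rw [sHeight_append, Nat.sub_eq_zero_of_le h, sHeight_zero, add_zero]

lemma sHeight_append_right (L1 L2 : List SStep) (i : ℕ) :
    sHeight (L1 ++ L2) (L1.length + i) = tot L1 + sHeight L2 i := by
  rw [sHeight_append, sHeight_of_length_le (Nat.le_add_right _ _), Nat.add_sub_cancel_left]

lemma sHeight_succ (L : List SStep) (i : ℕ) :
    sHeight L (i + 1) = sHeight L i + ((L[i]?).elim 0 SStep.eff) := by
  rw [sHeight, List.take_succ]
  cases h : L[i]? <;> simp [sHeight, h]

/-- nonnegativity of heights starting from base `h` -/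
def NN (h : ℤ) (L : List SStep) : Prop := ∀ i, 0 ≤ h + sHeight L i

/-- pointwise condition on (height, step) pairs starting from base `h` -/
def Pt (P : ℤ → SStep → Prop) (h : ℤ) (L : List SStep) : Prop :=
  ∀ i s, L[i]? = some s → P (h + sHeight L i) s

lemma NN_nil {h} : NN h ([] : List SStep) ↔ 0 ≤ h := by simp [NN]

lemma NN_cons {h s L} : NN h (s :: L) ↔ 0 ≤ h ∧ NN (h + eff s) L := by
  constructor
  · intro hn
    refine ⟨by simpa using hn 0, fun i => ?_⟩
    have := hn (i + 1); rw [sHeight_cons] at this; linarith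
  · rintro ⟨h0, hn⟩ i
    cases i with
    | zero => simpa
    | succ i => rw [sHeight_cons]; have := hn i; linarith

lemma NN_append {h L1 L2} : NN h (L1 ++ L2) ↔ NN h L1 ∧ NN (h + tot L1) L2 := by
  constructor
  · intro hn
    constructor
    · intro i
      rcases le_or_gt i L1.length with h1 | h1
      · have := hn i; rwa [sHeight_append_left h1] at this
      · rw [sHeight_of_length_le h1.le]
        have := hn L1.length
        rwa [sHeight_append_left le_rfl, sHeight_of_length_le le_rfl] at this
    · intro i
      have := hn (L1.length + i)
      rw [sHeight_append_right] at this; linarith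
  · rintro ⟨h1, h2⟩ i
    rw [sHeight_append]
    rcases le_or_gt i L1.length with hi | hi
    · rw [Nat.sub_eq_zero_of_le hi, sHeight_zero, add_zero]; exact h1 i
    · rw [sHeight_of_length_le hi.le]
      have := h2 (i - L1.length); linarith

lemma Pt_nil {P h} : Pt P h ([] : List SStep) := by intro i s hs; simp at hs

lemma Pt_cons {P h s L} : Pt P h (s :: L) ↔ P h s ∧ Pt P (h + eff s) L := by
  constructor
  · intro hp
    refine ⟨by simpa using hp 0 s (by simp), fun i t ht => ?_⟩
    have := hp (i + 1) t (by simpa using ht)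
    rwa [sHeight_cons, ← add_assoc] at this
  · rintro ⟨h0, hp⟩ i t ht
    cases i with
    | zero => simp at ht; subst ht; simpa using h0
    | succ i =>
      rw [List.getElem?_cons_succ] at ht
      rw [sHeight_cons, ← add_assoc]
      exact hp i t ht

lemma Pt_append {P h L1 L2} : Pt P h (L1 ++ L2) ↔ Pt P h L1 ∧ Pt P (h + tot L1) L2 := by
  constructor
  · intro hp
    constructor
    · intro i s hs
      have hi : i < L1.length := (List.getElem?_eq_some_iff.mp hs).1
      have := hp i s (by rwa [List.getElem?_append_left hi])
      rwa [sHeight_append_left hi.le] at this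
    · intro i s hs
      have := hp (L1.length + i) s
        (by rwa [List.getElem?_append_right (Nat.le_add_right _ _), Nat.add_sub_cancel_left])
      rw [sHeight_append_right, ← add_assoc] at this
      exact this
  · rintro ⟨h1, h2⟩ i s hs
    rcases lt_or_ge i L1.length with hi | hi
    · rw [List.getElem?_append_left hi] at hs
      rw [sHeight_append_left hi.le]
      exact h1 i s hs
    · rw [List.getElem?_append_right hi] at hs
      rw [sHeight_append, sHeight_of_length_le hi, ← add_assoc]
      exact h2 _ s hs

lemma Pt_replicateH {P : ℤ → SStep → Prop} {h : ℤ} (hP : P h H) (a : ℕ) :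
    Pt P h (List.replicate a H) := by
  induction a with
  | zero => exact Pt_nil
  | succ a ih =>
    rw [List.replicate_succ, Pt_cons]
    exact ⟨hP, by simpa [eff] using ih⟩

lemma Pt_mono {P Q : ℤ → SStep → Prop} (hPQ : ∀ x s, P x s → Q x s) {h L} (hp : Pt P h L) :
    Pt Q h L := fun i s hs => hPQ _ _ (hp i s hs)

end SchAux

namespace SchAux
open SStep

lemma UHFree_nil : UHFree [] := by intro i; simp [UHFree]

lemma UHFree_cons {s L} (h1 : ¬(s = U ∧ L[0]? = some H)) (h2 : UHFree L) :
    UHFree (s :: L) := by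
  intro i
  cases i with
  | zero =>
    rintro ⟨ha, hb⟩
    simp at ha hb
    exact h1 ⟨ha, by simpa using hb⟩
  | succ i =>
    rintro ⟨ha, hb⟩
    exact h2 i ⟨by simpa using ha, by simpa using hb⟩

lemma UHFree_append {L1 L2} (h1 : UHFree L1) (h2 : UHFree L2)
    (hb : L2[0]? ≠ some H) : UHFree (L1 ++ L2) := by
  rintro i ⟨ha, hc⟩
  rcases lt_or_ge i L1.length with hi | hi
  · rw [List.getElem?_append_left hi] at ha
    rcases lt_or_ge (i+1) L1.length with hj | hj
    · rw [List.getElem?_append_left hj] at hc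
      exact h1 i ⟨ha, hc⟩
    · have hj' : i + 1 = L1.length := by omega
      rw [List.getElem?_append_right hj] at hc
      rw [hj', Nat.sub_self] at hc
      exact hb hc
  · rw [List.getElem?_append_right hi] at ha
    rw [List.getElem?_append_right (by omega : L1.length ≤ i + 1)] at hc
    have : i + 1 - L1.length = (i - L1.length) + 1 := by omega
    rw [this] at hc
    exact h2 _ ⟨ha, hc⟩

lemma UHFree_of_noU {L : List SStep} (h : ∀ i : ℕ, L[i]? ≠ some U) : UHFree L := by
  rintro i ⟨ha, _⟩; exact h i ha

lemma UHFree_of_noH {L : List SStep} (h : ∀ i : ℕ, L[i]? ≠ some H) : UHFree L := by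
  rintro i ⟨_, hb⟩; exact h (i+1) hb

lemma UHFree_replicateH (a : ℕ) : UHFree (List.replicate a H) := by
  apply UHFree_of_noU
  intro i hi
  have := List.getElem?_eq_some_iff.mp hi
  rcases this with ⟨h, he⟩
  simp [List.getElem_replicate] at he

/-! ### Grammar types and encoders -/

/-- Dyck words: `nil` ↦ empty, `node l r` ↦ `U l D r`. -/
inductive Dy : Type
  | nil : Dy
  | node : Dy → Dy → Dy

/-- semilength of a Dyck word -/
def sd : Dy → ℕ
  | .nil => 0
  | .node l r => sd l + sd r + 1

/-- encoding of Dyck words -/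
def ed : Dy → List SStep
  | .nil => []
  | .node l r => U :: (ed l ++ D :: ed r)

/-- encoding of inner words `(U d D H^a)*` at base height 1 -/
def em : List (Dy × ℕ) → List SStep
  | [] => []
  | (d, a) :: r => U :: (ed d ++ D :: (List.replicate a H ++ em r))

def szM : List (Dy × ℕ) → ℕ
  | [] => 0
  | (d, a) :: r => 1 + sd d + a + szM r

/-- component lists -/
abbrev TT := List (ℕ × List (Dy × ℕ))

def szT : TT → ℕ
  | [] => 0
  | (a, m) :: r => 1 + a + szM m + szT r

/-- A-side encoding: `U H^a ⟪m⟫ D` per component -/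
def encA : TT → List SStep
  | [] => []
  | (a, m) :: r => U :: (List.replicate a H ++ (em m ++ D :: encA r))

/-- B-side encoding: `U ⟪m⟫ D H^a` per component -/
def encB : TT → List SStep
  | [] => []
  | (a, m) :: r => U :: (em m ++ D :: (List.replicate a H ++ encB r))

lemma em_head (m : List (Dy × ℕ)) : (em m)[0]? ≠ some H := by
  cases m with
  | nil => simp [em]
  | cons p r => rcases p with ⟨d, a⟩; simp [em]

lemma emD_head (m : List (Dy × ℕ)) (t : List SStep) :
    (em m ++ D :: t)[0]? ≠ some H := by
  cases m with
  | nil => simp [em]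
  | cons p r => rcases p with ⟨d, a⟩; simp [em]

lemma encB_head (t : TT) : (encB t)[0]? ≠ some H := by
  cases t with
  | nil => simp [encB]
  | cons p r => rcases p with ⟨a, m⟩; simp [encB]

lemma encA_head (t : TT) : (encA t)[0]? ≠ some H := by
  cases t with
  | nil => simp [encA]
  | cons p r => rcases p with ⟨a, m⟩; simp [encA]

/-! ### Injectivity -/

lemma hrun_eq : ∀ (a a' : ℕ) (x y : List SStep), x[0]? ≠ some H → y[0]? ≠ some H →
    List.replicate a H ++ x = List.replicate a' H ++ y → a = a' ∧ x = y := by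
  intro a
  induction a with
  | zero =>
    intro a' x y hx hy he
    cases a' with
    | zero => simpa using he
    | succ a' =>
      exfalso
      rw [List.replicate_succ] at he
      simp at he
      subst he
      simp at hx
  | succ a ih =>
    intro a' x y hx hy he
    cases a' with
    | zero =>
      exfalso
      rw [List.replicate_succ] at he
      simp at he
      rw [← he] at hy
      simp at hy
    | succ a' =>
      rw [List.replicate_succ, List.replicate_succ] at he
      simp at he
      obtain ⟨h1, h2⟩ := ih a' x y hx hy he
      exact ⟨by omega, h2⟩

end SchAux

namespace SchAux
open SStep

lemma ed_cont : ∀ (d1 d2 : Dy) (t1 t2 : List SStep),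
    ed d1 ++ D :: t1 = ed d2 ++ D :: t2 → d1 = d2 ∧ t1 = t2 := by
  intro d1
  induction d1 with
  | nil =>
    intro d2 t1 t2 he
    cases d2 with
    | nil => simpa [ed] using he
    | node l r => simp [ed] at he
  | node l r ihl ihr =>
    intro d2 t1 t2 he
    cases d2 with
    | nil => simp [ed] at he
    | node l' r' =>
      simp only [ed, List.cons_append, List.append_assoc, List.cons.injEq] at he
      obtain ⟨-, he⟩ := he
      obtain ⟨h1, h2⟩ := ihl l' _ _ he
      obtain ⟨h3, h4⟩ := ihr r' _ _ h2
      rw [h1, h3, h4]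
      exact ⟨rfl, rfl⟩

lemma em_cont : ∀ (m m' : List (Dy × ℕ)) (t t' : List SStep),
    em m ++ D :: t = em m' ++ D :: t' → m = m' ∧ t = t' := by
  intro m
  induction m with
  | nil =>
    intro m' t t' he
    cases m' with
    | nil => simpa [em] using he
    | cons p r => rcases p with ⟨d, a⟩; simp [em] at he
  | cons p r ih =>
    rcases p with ⟨d, a⟩
    intro m' t t' he
    cases m' with
    | nil => simp [em] at he
    | cons p' r' =>
      rcases p' with ⟨d', a'⟩
      simp only [em, List.cons_append, List.append_assoc, List.cons.injEq] at he
      obtain ⟨-, he⟩ := he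
      obtain ⟨h1, h2⟩ := ed_cont d d' _ _ he
      obtain ⟨h3, h4⟩ := hrun_eq a a' _ _ (emD_head r t) (emD_head r' t') h2
      obtain ⟨h5, h6⟩ := ih r' _ _ h4
      rw [h1, h3, h5, h6]
      exact ⟨rfl, rfl⟩

lemma encA_inj : ∀ (t1 t2 : TT), encA t1 = encA t2 → t1 = t2 := by
  intro t1
  induction t1 with
  | nil =>
    intro t2 he
    cases t2 with
    | nil => rfl
    | cons p r => rcases p with ⟨a, m⟩; simp [encA] at he
  | cons p r ih =>
    rcases p with ⟨a, m⟩
    intro t2 he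
    cases t2 with
    | nil => simp [encA] at he
    | cons p' r' =>
      rcases p' with ⟨a', m'⟩
      simp only [encA, List.cons.injEq] at he
      obtain ⟨-, he⟩ := he
      obtain ⟨h1, h2⟩ := hrun_eq a a' _ _ (emD_head m (encA r)) (emD_head m' (encA r')) he
      obtain ⟨h3, h4⟩ := em_cont m m' _ _ h2
      rw [ih r' h4, h1, h3]

lemma encB_inj : ∀ (t1 t2 : TT), encB t1 = encB t2 → t1 = t2 := by
  intro t1
  induction t1 with
  | nil =>
    intro t2 he
    cases t2 with
    | nil => rfl
    | cons p r => rcases p with ⟨a, m⟩; simp [encB] at he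
  | cons p r ih =>
    rcases p with ⟨a, m⟩
    intro t2 he
    cases t2 with
    | nil => simp [encB] at he
    | cons p' r' =>
      rcases p' with ⟨a', m'⟩
      simp only [encB, List.cons.injEq] at he
      obtain ⟨-, he⟩ := he
      obtain ⟨h3, h4⟩ := em_cont m m' _ _ he
      have hx : (encB r)[0]? ≠ some H := encB_head r
      have hy : (encB r')[0]? ≠ some H := encB_head r'
      obtain ⟨h1, h2⟩ := hrun_eq a a' _ _ hx hy h4
      rw [ih r' h2, h1, h3]

end SchAux

namespace SchAux
open SStep

@[simp] lemma ed_tot (d : Dy) : tot (ed d) = 0 := by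
  induction d with
  | nil => simp [ed]
  | node l r ihl ihr => simp [ed, eff, ihl, ihr]

@[simp] lemma ed_wid (d : Dy) : wid (ed d) = 2 * sd d := by
  induction d with
  | nil => simp [ed, sd]
  | node l r ihl ihr => simp [ed, sd, len, ihl, ihr]; ring

@[simp] lemma sHeight_replicateH (a : ℕ) (i : ℕ) :
    sHeight (List.replicate a H) i = 0 := by
  simp [sHeight, List.take_replicate, eff]

lemma ed_NN (d : Dy) : ∀ h : ℤ, 0 ≤ h → NN h (ed d) := by
  induction d with
  | nil => intro h hh; simp [ed, NN_nil]; exact hh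
  | node l r ihl ihr =>
    intro h hh
    rw [ed, NN_cons, NN_append, NN_cons]
    have e1 : h + eff U = h + 1 := rfl
    refine ⟨hh, ?_, ?_, ?_⟩
    · exact e1 ▸ ihl _ (by linarith)
    · simp [eff, ed_tot]; linarith
    · simp [eff, ed_tot]
      exact ihr _ (by linarith)

lemma ed_noH (d : Dy) : ∀ h : ℤ, Pt (fun _ s => s ≠ H) h (ed d) := by
  induction d with
  | nil => intro h; exact Pt_nil
  | node l r ihl ihr =>
    intro h
    rw [ed, Pt_cons, Pt_append, Pt_cons]
    exact ⟨by simp, ihl _, by simp, ihr _⟩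

lemma ed_UH (d : Dy) : UHFree (ed d) := by
  apply UHFree_of_noH
  intro i hi
  exact ed_noH d 0 i H hi rfl

@[simp] lemma em_tot (m : List (Dy × ℕ)) : tot (em m) = 0 := by
  induction m with
  | nil => simp [em]
  | cons p r ih => rcases p with ⟨d, a⟩; simp [em, eff, ih]

@[simp] lemma em_wid (m : List (Dy × ℕ)) : wid (em m) = 2 * szM m := by
  induction m with
  | nil => simp [em, szM]
  | cons p r ih => rcases p with ⟨d, a⟩; simp [em, szM, len, ih]; ring

lemma em_NN (m : List (Dy × ℕ)) : ∀ h : ℤ, 0 ≤ h → NN h (em m) := by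
  induction m with
  | nil => intro h hh; rw [em, NN_nil]; exact hh
  | cons p r ih =>
    rcases p with ⟨d, a⟩
    intro h hh
    rw [em, NN_cons, NN_append, NN_cons, NN_append]
    have hU : h + eff U = h + 1 := rfl
    refine ⟨hh, hU ▸ ed_NN d _ (by linarith), ?_, ?_, ?_⟩
    · simp [eff, ed_tot]; linarith
    · intro i; simp [eff, ed_tot]; linarith
    · simp [eff, ed_tot]
      exact ih h hh

end SchAux

namespace SchAux
open SStep

lemma em_Pt (m : List (Dy × ℕ)) (c : ℤ) :
    Pt (fun x s => s = H → x = c) c (em m) := by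
  induction m with
  | nil => exact Pt_nil
  | cons p r ih =>
    rcases p with ⟨d, a⟩
    rw [em, Pt_cons, Pt_append, Pt_cons, Pt_append]
    have hU : c + eff U = c + 1 := rfl
    refine ⟨by simp, ?_, by simp, ?_, ?_⟩
    · exact Pt_mono (fun x s hne hs => absurd hs hne) (hU ▸ ed_noH d (c+1))
    · simp [eff, ed_tot]
      exact Pt_replicateH (by simp) a
    · simp [eff, ed_tot]
      exact ih

lemma em_UH (m : List (Dy × ℕ)) : UHFree (em m) := by
  induction m with
  | nil => exact UHFree_nil
  | cons p r ih =>
    rcases p with ⟨d, a⟩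
    rw [em]
    apply UHFree_cons
    · rintro ⟨-, hb⟩
      cases d with
      | nil => simp [ed] at hb
      | node l r' => simp [ed] at hb
    · apply UHFree_append (ed_UH d)
      · apply UHFree_cons (by simp)
        apply UHFree_append (UHFree_replicateH a) ih (em_head r)
      · simp

end SchAux

namespace SchAux
open SStep

@[simp] lemma encA_tot (t : TT) : tot (encA t) = 0 := by
  induction t with
  | nil => simp [encA]
  | cons p r ih => rcases p with ⟨a, m⟩; simp [encA, eff, ih]

@[simp] lemma encB_tot (t : TT) : tot (encB t) = 0 := by
  induction t with
  | nil => simp [encB]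
  | cons p r ih => rcases p with ⟨a, m⟩; simp [encB, eff, ih]

@[simp] lemma encA_wid (t : TT) : wid (encA t) = 2 * szT t := by
  induction t with
  | nil => simp [encA, szT]
  | cons p r ih => rcases p with ⟨a, m⟩; simp [encA, szT, len, ih]; ring

@[simp] lemma encB_wid (t : TT) : wid (encB t) = 2 * szT t := by
  induction t with
  | nil => simp [encB, szT]
  | cons p r ih => rcases p with ⟨a, m⟩; simp [encB, szT, len, ih]; ring

lemma encA_NN (t : TT) : NN 0 (encA t) := by
  induction t with
  | nil => rw [encA, NN_nil]
  | cons p r ih =>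
    rcases p with ⟨a, m⟩
    rw [encA, NN_cons, NN_append, NN_append, NN_cons]
    refine ⟨le_refl 0, ?_, ?_, ?_, ?_⟩
    · intro i; simp [eff]
    · exact (by norm_num [eff] : (0:ℤ) + eff U + tot (List.replicate a H) = 1) ▸
        em_NN m _ (by norm_num [eff])
    · simp [eff]
    · simpa [eff] using ih

lemma encB_NN (t : TT) : NN 0 (encB t) := by
  induction t with
  | nil => rw [encB, NN_nil]
  | cons p r ih =>
    rcases p with ⟨a, m⟩
    rw [encB, NN_cons, NN_append, NN_cons, NN_append]
    refine ⟨le_refl 0, ?_, ?_, ?_, ?_⟩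
    · exact (by norm_num [eff] : (0:ℤ) + eff U = 1) ▸ em_NN m 1 one_pos.le
    · simp [eff]
    · intro i; simp [eff]
    · simpa [eff] using ih

lemma encA_Pt (t : TT) : Pt (fun x s => s = H → x = 1) 0 (encA t) := by
  induction t with
  | nil => exact Pt_nil
  | cons p r ih =>
    rcases p with ⟨a, m⟩
    rw [encA, Pt_cons, Pt_append, Pt_append, Pt_cons]
    refine ⟨by simp, ?_, ?_, by simp, ?_⟩
    · simp only [eff]
      exact Pt_replicateH (by norm_num) a
    · simp only [eff, tot_replicateH]
      have e : (0:ℤ) + 1 + 0 = 1 := by norm_num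
      exact e ▸ em_Pt m 1
    · simpa [eff] using ih

lemma encB_Pt (t : TT) : Pt (fun x s => s = H → x ≤ 1) 0 (encB t) := by
  induction t with
  | nil => exact Pt_nil
  | cons p r ih =>
    rcases p with ⟨a, m⟩
    rw [encB, Pt_cons, Pt_append, Pt_cons, Pt_append]
    refine ⟨by simp, ?_, by simp, ?_, ?_⟩
    · have e : (0:ℤ) + eff U = 1 := by norm_num [eff]
      exact e ▸ Pt_mono (fun x s hx hs => le_of_eq (hx hs)) (em_Pt m 1)
    · simp only [eff, em_tot]
      exact Pt_replicateH (by norm_num) a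
    · simpa [eff] using ih

lemma encB_UH (t : TT) : UHFree (encB t) := by
  induction t with
  | nil => exact UHFree_nil
  | cons p r ih =>
    rcases p with ⟨a, m⟩
    rw [encB]
    apply UHFree_cons
    · rintro ⟨-, hb⟩; exact emD_head m _ hb
    · apply UHFree_append (em_UH m)
      · apply UHFree_cons (by simp)
        exact UHFree_append (UHFree_replicateH a) ih (encB_head r)
      · simp

lemma encB_headU (t : TT) (ht : t ≠ []) : (encB t)[0]? = some U := by
  cases t with
  | nil => exact absurd rfl ht
  | cons p r => rcases p with ⟨a, m⟩; simp [encB]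

end SchAux

namespace SchAux
open SStep

lemma sHeight_take (S : List SStep) (k i : ℕ) :
    sHeight (S.take k) i = sHeight S (min i k) := by
  simp [sHeight, List.take_take]

lemma tot_take_eq_sHeight (S : List SStep) (k : ℕ) : tot (S.take k) = sHeight S k := rfl

lemma eff_elim_bounds (o : Option SStep) : -1 ≤ o.elim 0 SStep.eff ∧ o.elim 0 SStep.eff ≤ 1 := by
  cases o with
  | none => simp
  | some s => cases s <;> simp [eff]

/-- first-return decomposition -/
lemma first_return (S : List SStep) (h1 : tot S = -1) (h2 : NN 1 S) :
    ∃ w R, S = w ++ D :: R ∧ tot w = 0 ∧ NN 0 w := by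
  classical
  have hex : ∃ j, 1 + sHeight S j = 0 :=
    ⟨S.length, by rw [sHeight_of_length_le le_rfl, h1]; ring⟩
  obtain ⟨j', hj⟩ : ∃ j', Nat.find hex = j' + 1 := by
    have h0 : Nat.find hex ≠ 0 := by
      intro h
      have := Nat.find_spec hex
      rw [h] at this; simp at this
    exact ⟨Nat.find hex - 1, by omega⟩
  have hspec : 1 + sHeight S (j' + 1) = 0 := hj ▸ Nat.find_spec hex
  have hmin : ∀ k, k ≤ j' → 1 + sHeight S k ≠ 0 := by
    intro k hk
    exact Nat.find_min hex (by omega)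
  have hjlen : j' + 1 ≤ S.length := by
    by_contra hc
    push_neg at hc
    have : 1 + sHeight S S.length = 0 := by
      rw [sHeight_of_length_le le_rfl, h1]; ring
    rcases le_or_gt S.length j' with h | h
    · exact hmin _ h this
    · omega
  have hstep := sHeight_succ S j'
  have hbd := eff_elim_bounds (S[j']?)
  have hprev : sHeight S j' = 0 := by
    have hne := hmin j' le_rfl
    have hnn := h2 j'
    omega
  have heff : (S[j']?).elim 0 SStep.eff = -1 := by omega
  have hD : S[j']? = some D := by
    cases hS : S[j']? with
    | none => rw [hS] at heff; simp at heff
    | some s =>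
      rw [hS] at heff
      cases s <;> simp [eff] at heff <;> rfl
  have hj'len : j' < S.length := by omega
  have hget : S[j'] = D := by
    obtain ⟨h, he⟩ := List.getElem?_eq_some_iff.mp hD
    exact he
  refine ⟨S.take j', S.drop (j' + 1), ?_, ?_, ?_⟩
  · conv_lhs => rw [← List.take_append_drop j' S]
    rw [List.drop_eq_getElem_cons hj'len, hget]
  · rw [tot_take_eq_sHeight, hprev]
  · intro i
    rw [sHeight_take]
    rcases le_or_gt j' i with h | h
    · rw [min_eq_right h, hprev]; norm_num
    · rw [min_eq_left h.le]
      have hne := hmin i h.le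
      have hnn := h2 i
      omega

def stripH : List SStep → ℕ × List SStep
  | [] => (0, [])
  | U :: L => (0, U :: L)
  | D :: L => (0, D :: L)
  | H :: L => ((stripH L).1 + 1, (stripH L).2)

lemma stripH_spec : ∀ L : List SStep,
    L = List.replicate (stripH L).1 H ++ (stripH L).2 ∧
    (stripH L).2[0]? ≠ some H ∧ (stripH L).2.length ≤ L.length := by
  intro L
  induction L with
  | nil => simp [stripH]
  | cons s L ih =>
    cases s with
    | U => simp [stripH]
    | D => simp [stripH]
    | H =>
      obtain ⟨h1, h2, h3⟩ := ih
      refine ⟨?_, h2, by simpa [stripH] using Nat.le_succ_of_le h3⟩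
      rw [stripH]
      simp only [List.replicate_succ, List.cons_append]
      exact congrArg (H :: ·) h1

end SchAux

namespace SchAux
open SStep

lemma head_U {L : List SStep} (hne : L ≠ []) (hNN : NN 0 L) (hH : L[0]? ≠ some H) :
    ∃ L₂, L = U :: L₂ := by
  cases L with
  | nil => exact absurd rfl hne
  | cons s L₂ =>
    cases s with
    | U => exact ⟨L₂, rfl⟩
    | D =>
      exfalso
      have := hNN 1
      rw [sHeight_cons] at this
      simp [eff] at this
    | H => exact absurd (by simp) hH

/-- decompose conditions along `L₂ = w ++ D :: R` where `tot w = 0`, base height 1 -/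
lemma decomp_UwDR {P : ℤ → SStep → Prop} {L₂ w R : List SStep}
    (hS : L₂ = w ++ D :: R) (htot : tot L₂ = -1) (hNN : NN 1 L₂) (hPt : Pt P 1 L₂)
    (hw : tot w = 0) :
    tot R = 0 ∧ NN 0 R ∧ Pt P 0 R ∧ Pt P 1 w := by
  subst hS
  rw [tot_append, tot_cons] at htot
  rw [NN_append, NN_cons] at hNN
  rw [Pt_append, Pt_cons] at hPt
  have heff : SStep.eff D = -1 := rfl
  have e : (1:ℤ) + tot w + SStep.eff D = 0 := by rw [hw, heff]; ring
  rw [hw, heff] at htot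
  refine ⟨by linarith, e ▸ hNN.2.2, e ▸ hPt.2.2, hPt.1⟩

/-- decompose conditions along the strip of leading `H`s, at base height `h` -/
lemma decomp_strip {P : ℤ → SStep → Prop} {h c : ℤ} {L₂ : List SStep}
    (htot : tot L₂ = c) (hNN : NN h L₂) (hPt : Pt P h L₂) :
    L₂ = List.replicate (stripH L₂).1 H ++ (stripH L₂).2 ∧
    tot (stripH L₂).2 = c ∧ NN h (stripH L₂).2 ∧ Pt P h (stripH L₂).2 ∧
    (stripH L₂).2[0]? ≠ some H ∧ (stripH L₂).2.length ≤ L₂.length := by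
  obtain ⟨h1, h2, h3⟩ := stripH_spec L₂
  rw [h1, tot_append, tot_replicateH, zero_add] at htot
  rw [h1, NN_append, tot_replicateH, add_zero] at hNN
  rw [h1, Pt_append, tot_replicateH, add_zero] at hPt
  exact ⟨h1, htot, hNN.2, hPt.2, h2, h3⟩

/-- common first part: `L ≠ []` with the conditions gives `L = U :: L₂` and transferred data -/
lemma split_head {P : ℤ → SStep → Prop} {L : List SStep} (hne : L ≠ [])
    (htot : tot L = 0) (hNN : NN 0 L) (hPt : Pt P 0 L) (hH : L[0]? ≠ some H) :
    ∃ L₂, L = U :: L₂ ∧ tot L₂ = -1 ∧ NN 1 L₂ ∧ Pt P 1 L₂ ∧ L₂.length + 1 = L.length := by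
  obtain ⟨L₂, rfl⟩ := head_U hne hNN hH
  rw [tot_cons] at htot
  rw [NN_cons] at hNN
  rw [Pt_cons] at hPt
  have e : (0:ℤ) + SStep.eff U = 1 := by norm_num [SStep.eff]
  have he : SStep.eff U = 1 := rfl
  rw [he] at htot
  exact ⟨L₂, rfl, by linarith, e ▸ hNN.2, e ▸ hPt.2, by simp⟩

def DyH (L : List SStep) : Prop := tot L = 0 ∧ NN 0 L ∧ Pt (fun _ s => s ≠ H) 0 L
def MH (L : List SStep) : Prop :=
  tot L = 0 ∧ NN 0 L ∧ Pt (fun x s => s = H → x = 0) 0 L ∧ L[0]? ≠ some H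
def AH (L : List SStep) : Prop := tot L = 0 ∧ NN 0 L ∧ Pt (fun x s => s = H → x = 1) 0 L
def BH (L : List SStep) : Prop :=
  tot L = 0 ∧ NN 0 L ∧ Pt (fun x s => s = H → x ≤ 1) 0 L ∧ UHFree L ∧ L[0]? ≠ some H

end SchAux

namespace SchAux
open SStep

lemma parse : ∀ N (L : List SStep), L.length ≤ N →
    (DyH L → ∃ d, ed d = L) ∧ (MH L → ∃ m, em m = L) ∧
    (AH L → ∃ t, encA t = L) ∧ (BH L → ∃ t, encB t = L) := by
  intro N
  induction N with
  | zero =>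
    intro L hLen
    have : L = [] := List.length_eq_zero_iff.mp (Nat.le_zero.mp hLen)
    subst this
    exact ⟨fun _ => ⟨Dy.nil, rfl⟩, fun _ => ⟨[], rfl⟩, fun _ => ⟨[], rfl⟩, fun _ => ⟨[], rfl⟩⟩
  | succ N ih =>
    intro L hLen
    by_cases hne : L = []
    · subst hne
      exact ⟨fun _ => ⟨Dy.nil, rfl⟩, fun _ => ⟨[], rfl⟩, fun _ => ⟨[], rfl⟩, fun _ => ⟨[], rfl⟩⟩
    · refine ⟨?_, ?_, ?_, ?_⟩
      -- Dyck case
      · rintro ⟨htot, hNN, hPt⟩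
        have hH : L[0]? ≠ some H := fun h => absurd rfl (hPt 0 H h)
        obtain ⟨L₂, rfl, htot₂, hNN₂, hPt₂, hlen⟩ := split_head hne htot hNN hPt hH
        obtain ⟨w, R, hS, hw, hNNw⟩ := first_return L₂ htot₂ hNN₂
        obtain ⟨htotR, hNNR, hPtR, hPtw⟩ := decomp_UwDR hS htot₂ hNN₂ hPt₂ hw
        have hlen2 := congrArg List.length hS
        simp at hlen2
        obtain ⟨d1, hd1⟩ := (ih w (by omega)).1 ⟨hw, hNNw, fun i s hs => hPtw i s hs⟩
        obtain ⟨d2, hd2⟩ := (ih R (by omega)).1 ⟨htotR, hNNR, hPtR⟩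
        exact ⟨Dy.node d1 d2, by rw [ed, hd1, hd2, ← hS]⟩
      -- M case
      · rintro ⟨htot, hNN, hPt, hH⟩
        obtain ⟨L₂, rfl, htot₂, hNN₂, hPt₂, hlen⟩ := split_head hne htot hNN hPt hH
        obtain ⟨w, R', hS, hw, hNNw⟩ := first_return L₂ htot₂ hNN₂
        obtain ⟨htotR, hNNR, hPtR, hPtw⟩ := decomp_UwDR hS htot₂ hNN₂ hPt₂ hw
        have hPtw' : Pt (fun _ s => s ≠ H) 0 w := by
          intro i s hs hsH
          have h1 := hPtw i s hs hsH
          have h2 := hNNw i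
          simp at h2
          linarith
        have hlen2 := congrArg List.length hS
        simp at hlen2
        obtain ⟨d, hd⟩ := (ih w (by omega)).1 ⟨hw, hNNw, hPtw'⟩
        obtain ⟨hsplit, htotS, hNNS, hPtS, hHS, hlenS⟩ := decomp_strip htotR hNNR hPtR
        obtain ⟨m', hm'⟩ := (ih (stripH R').2 (by omega)).2.1 ⟨htotS, hNNS, hPtS, hHS⟩
        refine ⟨(d, (stripH R').1) :: m', ?_⟩
        rw [em, hd, hm', ← hsplit, ← hS]
      -- A case
      · rintro ⟨htot, hNN, hPt⟩
        have hH : L[0]? ≠ some H := by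
          intro h
          have := hPt 0 H h rfl
          simp at this
        obtain ⟨L₂, rfl, htot₂, hNN₂, hPt₂, hlen⟩ := split_head hne htot hNN hPt hH
        obtain ⟨hsplit, htotS, hNNS, hPtS, hHS, hlenS⟩ := decomp_strip htot₂ hNN₂ hPt₂
        obtain ⟨w, R, hS, hw, hNNw⟩ := first_return (stripH L₂).2 htotS hNNS
        obtain ⟨htotR, hNNR, hPtR, hPtw⟩ := decomp_UwDR hS htotS hNNS hPtS hw
        have hPtw' : Pt (fun x s => s = H → x = 0) 0 w := by
          intro i s hs hsH
          have h1 := hPtw i s hs hsH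
          linarith
        have hHw : w[0]? ≠ some H := by
          cases w with
          | nil => simp
          | cons x w' =>
            intro hc
            apply hHS
            rw [hS]
            simpa using hc
        have hlen2 := congrArg List.length hS
        simp at hlen2
        obtain ⟨m, hm⟩ := (ih w (by omega)).2.1 ⟨hw, hNNw, hPtw', hHw⟩
        obtain ⟨t', ht'⟩ := (ih R (by omega)).2.2.1 ⟨htotR, hNNR, hPtR⟩
        refine ⟨((stripH L₂).1, m) :: t', ?_⟩
        rw [encA, hm, ht', ← hS, ← hsplit]
      -- B case
      · rintro ⟨htot, hNN, hPt, hUH, hH⟩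
        obtain ⟨L₂, hL, htot₂, hNN₂, hPt₂, hlen⟩ := split_head hne htot hNN hPt hH
        obtain ⟨w, R', hS, hw, hNNw⟩ := first_return L₂ htot₂ hNN₂
        obtain ⟨htotR, hNNR, hPtR, hPtw⟩ := decomp_UwDR hS htot₂ hNN₂ hPt₂ hw
        have hPtw' : Pt (fun x s => s = H → x = 0) 0 w := by
          intro i s hs hsH
          have h1 := hPtw i s hs hsH
          have h2 := hNNw i
          simp at h2
          linarith
        have hHw : w[0]? ≠ some H := by
          cases w with
          | nil => simp
          | cons x w' =>
            intro hc
            apply hUH 0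
            constructor
            · rw [hL]; simp
            · rw [hL, hS]; simpa using hc
        have hlen2 := congrArg List.length hS
        simp at hlen2
        have hlenL := congrArg List.length hL
        simp at hlenL
        obtain ⟨m, hm⟩ := (ih w (by omega)).2.1 ⟨hw, hNNw, hPtw', hHw⟩
        obtain ⟨hsplit, htotS, hNNS, hPtS, hHS, hlenS⟩ := decomp_strip htotR hNNR hPtR
        have hUHR : UHFree (stripH R').2 := by
          have hLX : L = (U :: (w ++ D :: List.replicate (stripH R').1 H)) ++ (stripH R').2 := by
            conv_lhs => rw [hL, hS, hsplit]
            simp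
          set X := U :: (w ++ D :: List.replicate (stripH R').1 H) with hX
          rintro i ⟨ha, hb⟩
          apply hUH (X.length + i)
          constructor
          · rw [hLX, List.getElem?_append_right (Nat.le_add_right _ _), Nat.add_sub_cancel_left]
            exact ha
          · rw [hLX, List.getElem?_append_right (by omega : X.length ≤ X.length + i + 1)]
            have he : X.length + i + 1 - X.length = i + 1 := by omega
            rw [he]
            exact hb
        obtain ⟨t', ht'⟩ := (ih (stripH R').2 (by omega)).2.2.2 ⟨htotS, hNNS, hPtS, hUHR, hHS⟩
        refine ⟨((stripH R').1, m) :: t', ?_⟩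
        rw [encB, hm, ht']
        conv_rhs => rw [hL, hS, hsplit]

end SchAux

namespace SchAux
open SStep

lemma encA_props (t : TT) (n : ℕ) (h : szT t = n) :
    (List.map SStep.len (encA t)).sum = 2 * n ∧
    (List.map SStep.eff (encA t)).sum = 0 ∧ (∀ i, 0 ≤ sHeight (encA t) i) ∧
    ∀ i : ℕ, (encA t)[i]? = some SStep.H → sHeight (encA t) i = 1 := by
  refine ⟨?_, encA_tot t, ?_, ?_⟩
  · have := encA_wid t
    rw [wid] at this
    rw [this, h]
  · intro i
    have := encA_NN t i
    linarith
  · intro i hi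
    have := encA_Pt t i H hi rfl
    linarith

lemma encB_props (t : TT) (n : ℕ) (h : szT t = n) (hn : 1 ≤ n) :
    (List.map SStep.len (encB t)).sum = 2 * n ∧
    (List.map SStep.eff (encB t)).sum = 0 ∧ (∀ i, 0 ≤ sHeight (encB t) i) ∧
    UHFree (encB t) ∧ (encB t)[0]? = some SStep.U ∧
    ∀ i : ℕ, (encB t)[i]? = some SStep.H → sHeight (encB t) i ≤ 1 := by
  refine ⟨?_, encB_tot t, ?_, encB_UH t, ?_, ?_⟩
  · have := encB_wid t
    rw [wid] at this
    rw [this, h]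
  · intro i
    have := encB_NN t i
    linarith
  · apply encB_headU
    intro he
    rw [he, szT] at h
    omega
  · intro i hi
    have := encB_Pt t i H hi rfl
    linarith

noncomputable def eqvA (n : ℕ) :
    {t : TT // szT t = n} ≃ {L : List SStep // IsSchroder L n ∧
      ∀ i : ℕ, L[i]? = some SStep.H → sHeight L i = 1} :=
  Equiv.ofBijective
    (fun t => ⟨encA t.1, by
      obtain ⟨a, b, c, d⟩ := encA_props t.1 n t.2
      exact ⟨⟨a, b, c⟩, d⟩⟩) (by
    constructor
    · intro t1 t2 h
      exact Subtype.ext (encA_inj _ _ (congrArg Subtype.val h))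
    · rintro ⟨L, ⟨h1, h2, h3⟩, h4⟩
      have hAH : AH L := by
        refine ⟨h2, fun i => by rw [zero_add]; exact h3 i, ?_⟩
        intro i s hs hsH
        rw [zero_add]
        exact h4 i (hsH ▸ hs)
      obtain ⟨t, ht⟩ := (parse L.length L le_rfl).2.2.1 hAH
      have hw : 2 * szT t = 2 * n := by
        have := encA_wid t
        rw [ht] at this
        rw [wid] at this
        rw [← this]
        exact h1
      exact ⟨⟨t, by omega⟩, Subtype.ext ht⟩)

noncomputable def eqvB (n : ℕ) (hn : 1 ≤ n) :
    {t : TT // szT t = n} ≃ {L : List SStep // IsSchroder L n ∧ UHFree L ∧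
      L[0]? = some SStep.U ∧ ∀ i : ℕ, L[i]? = some SStep.H → sHeight L i ≤ 1} :=
  Equiv.ofBijective
    (fun t => ⟨encB t.1, by
      obtain ⟨a, b, c, d, e, f⟩ := encB_props t.1 n t.2 hn
      exact ⟨⟨a, b, c⟩, d, e, f⟩⟩) (by
    constructor
    · intro t1 t2 h
      exact Subtype.ext (encB_inj _ _ (congrArg Subtype.val h))
    · rintro ⟨L, ⟨h1, h2, h3⟩, h4, h5, h6⟩
      have hBH : BH L := by
        refine ⟨h2, fun i => by rw [zero_add]; exact h3 i, ?_, h4, by rw [h5]; simp⟩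
        intro i s hs hsH
        rw [zero_add]
        exact h6 i (hsH ▸ hs)
      obtain ⟨t, ht⟩ := (parse L.length L le_rfl).2.2.2 hBH
      have hw : 2 * szT t = 2 * n := by
        have := encB_wid t
        rw [ht] at this
        rw [wid] at this
        rw [← this]
        exact h1
      exact ⟨⟨t, by omega⟩, Subtype.ext ht⟩)

end SchAux


/-- For every integer `n ≥ 1`, the number of Schröder paths of length `2n` in which every
horizontal step `H²` has height `1` equals the number of UH-free Schröder paths of length
`2n` whose first step is `U` and which have no horizontal step of height greater than `1`. -/
theorem stmt7 (n : ℕ) (hn : 1 ≤ n) :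
    Nat.card {L : List SStep // IsSchroder L n ∧
        ∀ i, L[i]? = some SStep.H → sHeight L i = 1} =
    Nat.card {L : List SStep // IsSchroder L n ∧ UHFree L ∧ L[0]? = some SStep.U ∧
        ∀ i, L[i]? = some SStep.H → sHeight L i ≤ 1} := by
  exact Nat.card_congr ((SchAux.eqvA n).symm.trans (SchAux.eqvB n hn))
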